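/- For p in (1,∞) and (t₁,t₂) with t₂ < 1/p, the log moment generating function Λ_p(t₁,t₂) := log ∫_ℝ exp(t₁ y + t₂ |y|^p) γ_p(dy) satisfies Λ_p(t₁,t₂) = -(1/p) log(1 - p t₂) + log M_{γ_p}(t₁/(1 - p t₂)^{1/p}), where M_{γ_p}(t) = ∫_ℝ e^{t y} γ_p(dy). -/

import Mathlib

open Real MeasureTheory

/-- The generalized `p`-th Gaussian density. -/
noncomputable def fp (p : ℝ) (y : ℝ) : ℝ :=
  Real.exp (-|y| ^ p / p) / (2 * p ^ (1/p) * Real.Gamma (1 + 1/p))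

lemma integrable_exp_neg_mul_abs_rpow {b p : ℝ} (hb : 0 < b) (hp : 1 ≤ p) :
    Integrable (fun x : ℝ => Real.exp (-b * |x| ^ p)) := by
  have h1 : IntegrableOn (fun x : ℝ => Real.exp (-b * |x| ^ p)) (Set.Ioi 0) := by
    have := integrableOn_rpow_mul_exp_neg_mul_rpow (s := 0) (by norm_num) (by linarith) hb
    refine (integrableOn_congr_fun (fun x hx => ?_) measurableSet_Ioi).mp this
    rw [Real.rpow_zero, one_mul, abs_of_pos hx]
  have h2 : IntegrableOn (fun x : ℝ => Real.exp (-b * |x| ^ p)) (Set.Iic 0) := by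
    rw [← Measure.map_neg_eq_self (volume : Measure ℝ)]
    have m : MeasurableEmbedding fun x : ℝ => -x := (Homeomorph.neg ℝ).measurableEmbedding
    rw [m.integrableOn_map_iff]
    simp_rw [Function.comp_def, abs_neg, Set.neg_preimage, Set.neg_Iic, neg_zero]
    exact Iff.mpr integrableOn_Ici_iff_integrableOn_Ioi h1
  rw [← integrableOn_univ, ← Set.Iic_union_Ioi (a := (0:ℝ))]
  exact h2.union h1

lemma integrable_exp_mul_sub_rpow (p t : ℝ) (hp : 1 < p) :
    Integrable (fun x : ℝ => Real.exp (t * x - |x| ^ p / p)) := by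
  have hp0 : 0 < p := lt_trans one_pos hp
  set q := Real.conjExponent p with hq
  have hpq : q.HolderConjugate p := (Real.HolderConjugate.conjExponent hp).symm
  have hq0 : 0 < q := hpq.pos
  have hbase : Integrable (fun x : ℝ => Real.exp (-(1/(2*p)) * |x| ^ p)) :=
    integrable_exp_neg_mul_abs_rpow (by positivity) hp.le
  refine ((hbase.const_mul (Real.exp ((2*|t|) ^ q / (2*q)))).mono' ?_ ?_)
  · apply Measurable.aestronglyMeasurable
    exact (measurable_id.const_mul t |>.sub
      ((measurable_id.abs.pow_const p).div_const p)).exp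
  · filter_upwards with x
    rw [Real.norm_of_nonneg (Real.exp_nonneg _), ← Real.exp_add]
    apply Real.exp_le_exp.mpr
    have hy : (2*|t|) * |x| ≤ (2*|t|) ^ q / q + |x| ^ p / p :=
      Real.young_inequality_of_nonneg (by positivity) (abs_nonneg x) hpq
    have h1 : t * x ≤ |t| * |x| := by
      calc t * x ≤ |t * x| := le_abs_self _
        _ = |t| * |x| := abs_mul t x
    have e1 : (2*|t|) ^ q / (2*q) = ((2*|t|) ^ q / q) / 2 := by
      rw [div_div, mul_comm q 2]
    have e2 : -(1/(2*p)) * |x| ^ p = -((|x| ^ p / p) / 2) := by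
      rw [div_div, mul_comm p 2, one_div, neg_mul, inv_mul_eq_div]
    rw [e1, e2]
    linarith [hy, h1]

lemma integrable_exp_mul_fp (p t : ℝ) (hp : 1 < p) :
    Integrable (fun y : ℝ => Real.exp (t * y) * fp p y) := by
  have h := (integrable_exp_mul_sub_rpow p t hp).div_const
    (2 * p ^ (1/p) * Real.Gamma (1 + 1/p))
  refine h.congr (Filter.Eventually.of_forall fun y => ?_)
  have hexp : t * y + -|y| ^ p / p = t * y - |y| ^ p / p := by ring
  simp only [fp, ← mul_div_assoc, ← Real.exp_add, hexp]

lemma fp_pos {p : ℝ} (hp : 1 < p) (y : ℝ) : 0 < fp p y := by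
  have hp0 : 0 < p := lt_trans one_pos hp
  have hG : 0 < Real.Gamma (1 + 1/p) := Real.Gamma_pos_of_pos (by positivity)
  have hr : (0:ℝ) < p ^ (1/p) := Real.rpow_pos_of_pos hp0 _
  unfold fp
  positivity

lemma integral_exp_mul_fp_pos (p t : ℝ) (hp : 1 < p) :
    0 < ∫ y : ℝ, Real.exp (t * y) * fp p y := by
  rw [integral_pos_iff_support_of_nonneg
      (fun y => le_of_lt (mul_pos (Real.exp_pos _) (fp_pos hp y)))
      (integrable_exp_mul_fp p t hp)]
  have : Function.support (fun y : ℝ => Real.exp (t * y) * fp p y) = Set.univ :=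
    Set.eq_univ_iff_forall.mpr fun y => (mul_pos (Real.exp_pos _) (fp_pos hp y)).ne'
  rw [this]
  simp

theorem stmt2 (p t₁ t₂ : ℝ) (hp : 1 < p) (ht : t₂ < 1/p) :
    Real.log (∫ y : ℝ, Real.exp (t₁ * y + t₂ * |y| ^ p) * fp p y)
      = -(1/p) * Real.log (1 - p * t₂)
        + Real.log (∫ y : ℝ, Real.exp ((t₁ / (1 - p * t₂) ^ (1/p)) * y) * fp p y) := by
  have hp0 : 0 < p := lt_trans one_pos hp
  have hs : 0 < 1 - p * t₂ := by
    have h := (mul_lt_mul_iff_right₀ hp0).mpr ht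
    rw [mul_one_div, div_self hp0.ne'] at h
    linarith
  set c : ℝ := (1 - p * t₂) ^ (1/p) with hc
  have hc0 : 0 < c := Real.rpow_pos_of_pos hs _
  have hcp : c ^ p = 1 - p * t₂ := by
    rw [hc, ← Real.rpow_mul hs.le, one_div, inv_mul_cancel₀ hp0.ne', Real.rpow_one]
  have key : ∀ y : ℝ, Real.exp (t₁ * y + t₂ * |y| ^ p) * fp p y
      = Real.exp ((t₁ / c) * (c * y)) * fp p (c * y) := by
    intro y
    have habs : |c * y| ^ p = (1 - p * t₂) * |y| ^ p := by
      rw [abs_mul, abs_of_pos hc0, Real.mul_rpow hc0.le (abs_nonneg y), hcp]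
    have hexp : t₁ * y + t₂ * |y| ^ p + -|y| ^ p / p
        = (t₁ / c) * (c * y) + -|c * y| ^ p / p := by
      rw [habs]
      field_simp
      ring
    simp only [fp, ← mul_div_assoc, ← Real.exp_add, hexp]
  have h1 : (∫ y : ℝ, Real.exp (t₁ * y + t₂ * |y| ^ p) * fp p y)
      = c⁻¹ * ∫ y : ℝ, Real.exp ((t₁ / c) * y) * fp p y := by
    simp_rw [key]
    rw [MeasureTheory.Measure.integral_comp_mul_left
      (fun x : ℝ => Real.exp ((t₁ / c) * x) * fp p x) c,
      abs_of_pos (inv_pos.mpr hc0), smul_eq_mul]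
  rw [h1, Real.log_mul (inv_ne_zero hc0.ne') (integral_exp_mul_fp_pos p _ hp).ne',
    Real.log_inv, hc, Real.log_rpow hs]
  ring
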